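/- Let $V$ be a finite-dimensional real normed vector space and $\varepsilon > 0$. There exists $r_\varepsilon > 0$ such that for every hyperplane $V' \subseteq V$ and every pair of vectors $v_1, v_2 \in V$ of norm 1 with $\delta(\mathbb{R} v_i, \mathbb{P}(V')) \geq \varepsilon$ for $i = 1, 2$, the unique scalar $\alpha \in \mathbb{R}$ with $v_1 - \alpha v_2 \in V'$ satisfies $r_\varepsilon^{-1} \leq |\alpha| \leq r_\varepsilon$. -/
import Mathlib


open Filter Topology

variable {V : Type*} [NormedAddCommGroup V] [NormedSpace ℝ V]

/-- The distance between two lines (points of `ℙ(V)`), viewed as submodules: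
`d(x₁, x₂) = inf {‖v₁ - v₂‖ : vᵢ ∈ xᵢ, ‖vᵢ‖ = 1}`. -/
noncomputable def projDist (x₁ x₂ : Submodule ℝ V) : ℝ :=
  sInf {r : ℝ | ∃ v₁ ∈ x₁, ∃ v₂ ∈ x₂, ‖v₁‖ = 1 ∧ ‖v₂‖ = 1 ∧ r = ‖v₁ - v₂‖}

/-- The distance `δ(x, ℙ(W))` from a line `x` to the projectivization of a subspace `W`. -/
noncomputable def projDelta (x W : Submodule ℝ V) : ℝ :=
  sInf {r : ℝ | ∃ y : Submodule ℝ V, y ≤ W ∧ Module.finrank ℝ y = 1 ∧ r = projDist x y}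

/-- The spectral radius of an endomorphism, via Gelfand's formula; in finite dimension
this is the maximal modulus `λ₁(g)` of the complex eigenvalues of `g`. -/
noncomputable def specRad (g : V →L[ℝ] V) : ℝ :=
  Filter.limsup (fun n : ℕ => ‖g ^ n‖ ^ ((1 : ℝ) / n)) Filter.atTop

/-- `g` is proximal with top (real) eigenvalue `α`, attracting eigenvector `v`, and
invariant complementary hyperplane `W` on which the spectral radius is `< |α|`; this says
exactly that `α` is the unique eigenvalue of maximal modulus and has multiplicity one. -/
def IsProximalWith (g : V →L[ℝ] V) (α : ℝ) (v : V) (W : Submodule ℝ V) : Prop :=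
  v ≠ 0 ∧ g v = α • v ∧ IsCompl (Submodule.span ℝ {v}) W ∧
  ∃ gW : W →L[ℝ] W, (∀ w : W, g (w : V) = (gW w : V)) ∧ specRad gW < |α|

/-- `g` is `ε`-proximal with data `(α, v, W)`: it is proximal, `δ(x_g⁺, X_g^<) ≥ 2ε`,
`g` maps `B_g^ε` into `b_g^ε`, and `g` is `ε`-Lipschitz on `B_g^ε` (in `ℙ(V)`). -/
def IsEpsProximalWith (g : V →L[ℝ] V) (ε α : ℝ) (v : V) (W : Submodule ℝ V) : Prop :=
  IsProximalWith g α v W ∧ 2 * ε ≤ projDelta (Submodule.span ℝ {v}) W ∧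
  (∀ x : Submodule ℝ V, Module.finrank ℝ x = 1 → ε ≤ projDelta x W →
    Submodule.map (g : V →ₗ[ℝ] V) x ≠ ⊥ ∧
      projDist (Submodule.map (g : V →ₗ[ℝ] V) x) (Submodule.span ℝ {v}) ≤ ε) ∧
  (∀ x y : Submodule ℝ V, Module.finrank ℝ x = 1 → Module.finrank ℝ y = 1 →
    ε ≤ projDelta x W → ε ≤ projDelta y W →
    projDist (Submodule.map (g : V →ₗ[ℝ] V) x) (Submodule.map (g : V →ₗ[ℝ] V) y) ≤
      ε * projDist x y)

/-- `g` is `ε`-proximal. -/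
def IsEpsProximal (g : V →L[ℝ] V) (ε : ℝ) : Prop :=
  ∃ α v W, IsEpsProximalWith g ε α v W

private lemma projDist_nonneg' (x y : Submodule ℝ V) : 0 ≤ projDist x y := by
  apply Real.sInf_nonneg
  rintro r ⟨a, -, b, -, -, -, rfl⟩
  positivity

private lemma unit_smul_norm {u : V} (hu : u ≠ 0) : ‖‖u‖⁻¹ • u‖ = 1 := by
  rw [norm_smul, norm_inv, norm_norm, inv_mul_cancel₀ (norm_ne_zero_iff.2 hu)]

private lemma key_dist (ε : ℝ) (hε : 0 < ε) (V' : Submodule ℝ V) (v : V) (hv : ‖v‖ = 1)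
    (h : ε ≤ projDelta (Submodule.span ℝ {v}) V') :
    ∀ u ∈ V', ε / 2 ≤ ‖v - u‖ := by
  have hbdd : BddBelow {r : ℝ | ∃ y : Submodule ℝ V, y ≤ V' ∧ Module.finrank ℝ y = 1 ∧
      r = projDist (Submodule.span ℝ {v}) y} := by
    refine ⟨0, ?_⟩
    rintro r ⟨y, -, -, rfl⟩
    exact projDist_nonneg' _ _
  have step1 : ∀ w ∈ V', ‖w‖ = 1 → ε ≤ ‖v - w‖ := by
    intro w hw hw1
    have hw0 : w ≠ 0 := by intro h0; simp [h0] at hw1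
    have h1 : ε ≤ projDist (Submodule.span ℝ {v}) (Submodule.span ℝ {w}) := by
      refine h.trans (csInf_le hbdd ?_)
      exact ⟨Submodule.span ℝ {w}, Submodule.span_le.2 (by simpa using hw),
        finrank_span_singleton hw0, rfl⟩
    refine h1.trans (csInf_le ?_ ?_)
    · refine ⟨0, ?_⟩; rintro r ⟨a, -, b, -, -, -, rfl⟩; positivity
    · exact ⟨v, Submodule.mem_span_singleton_self v, w, Submodule.mem_span_singleton_self w,
        hv, hw1, rfl⟩
  have hV' : V' ≠ ⊥ := by
    rintro rfl
    have h0 : projDelta (Submodule.span ℝ {v}) (⊥ : Submodule ℝ V) = 0 := by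
      unfold projDelta
      convert Real.sInf_empty using 2
      ext r
      simp only [Set.mem_setOf_eq, Set.mem_empty_iff_false, iff_false]
      rintro ⟨y, hy, hrank, -⟩
      rw [le_bot_iff] at hy
      subst hy
      simp at hrank
    rw [h0] at h; linarith
  obtain ⟨u0, hu0mem, hu0⟩ := Submodule.exists_mem_ne_zero_of_ne_bot hV'
  have hε2 : ε ≤ 2 := by
    calc ε ≤ ‖v - ‖u0‖⁻¹ • u0‖ :=
          step1 (‖u0‖⁻¹ • u0) (V'.smul_mem _ hu0mem) (unit_smul_norm hu0)
    _ ≤ ‖v‖ + ‖‖u0‖⁻¹ • u0‖ := norm_sub_le _ _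
    _ = 2 := by rw [hv, unit_smul_norm hu0]; norm_num
  intro u hu
  rcases eq_or_ne u 0 with rfl | hu0'
  · rw [sub_zero, hv]; linarith
  · have h1 := step1 (‖u‖⁻¹ • u) (V'.smul_mem _ hu) (unit_smul_norm hu0')
    have h2 : ‖v - ‖u‖⁻¹ • u‖ ≤ ‖v - u‖ + |‖u‖ - 1| := by
      have heq : v - ‖u‖⁻¹ • u = (v - u) + (u - ‖u‖⁻¹ • u) := by abel
      rw [heq]
      refine (norm_add_le _ _).trans ?_
      gcongr
      have heq2 : u - ‖u‖⁻¹ • u = (1 - ‖u‖⁻¹) • u := by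
        rw [sub_smul, one_smul]
      have hu' : ‖u‖ ≠ 0 := norm_ne_zero_iff.2 hu0'
      rw [heq2, norm_smul, Real.norm_eq_abs,
        show |1 - ‖u‖⁻¹| * ‖u‖ = |1 - ‖u‖⁻¹| * |‖u‖| from by rw [abs_norm],
        ← abs_mul, sub_mul, one_mul, inv_mul_cancel₀ hu', abs_sub_comm]
    have h3 : |‖u‖ - 1| ≤ ‖v - u‖ := by
      have h4 := abs_norm_sub_norm_le v u
      rw [hv] at h4
      rwa [abs_sub_comm]
    linarith

/-- Lemma 6.1: for every `ε > 0` there is `r_ε > 0` such that, for every hyperplane `V'`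
and unit vectors `v₁, v₂` with `δ(ℝvᵢ, ℙ(V')) ≥ ε`, the scalar `α` defined by
`v₁ - α v₂ ∈ V'` satisfies `r_ε⁻¹ ≤ |α| ≤ r_ε`. -/
theorem stmt_16 [FiniteDimensional ℝ V] (ε : ℝ) (hε : 0 < ε) :
    ∃ r : ℝ, 0 < r ∧
      ∀ V' : Submodule ℝ V, Module.finrank ℝ V' + 1 = Module.finrank ℝ V →
      ∀ v₁ v₂ : V, ‖v₁‖ = 1 → ‖v₂‖ = 1 →
        ε ≤ projDelta (Submodule.span ℝ {v₁}) V' →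
        ε ≤ projDelta (Submodule.span ℝ {v₂}) V' →
        ∀ α : ℝ, v₁ - α • v₂ ∈ V' → r⁻¹ ≤ |α| ∧ |α| ≤ r := by
  refine ⟨2 / ε, by positivity, ?_⟩
  intro V' _ v₁ v₂ hv₁ hv₂ hδ₁ hδ₂ α hα
  have k₁ := key_dist ε hε V' v₁ hv₁ hδ₁
  have k₂ := key_dist ε hε V' v₂ hv₂ hδ₂
  have hα1 : ε / 2 ≤ |α| := by
    calc ε / 2 ≤ ‖v₁ - (v₁ - α • v₂)‖ := k₁ _ hα
    _ = |α| := by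
        rw [show v₁ - (v₁ - α • v₂) = α • v₂ from by abel, norm_smul, Real.norm_eq_abs,
          hv₂, mul_one]
  have hα0 : α ≠ 0 := by
    intro h0; rw [h0, abs_zero] at hα1; linarith
  have hp : 0 < |α| := abs_pos.2 hα0
  constructor
  · rw [show (2 / ε)⁻¹ = ε / 2 from by field_simp]
    exact hα1
  · have hmem : (-(α⁻¹)) • (v₁ - α • v₂) ∈ V' := V'.smul_mem _ hα
    have h5 := k₂ _ hmem
    have heq : v₂ - (-(α⁻¹)) • (v₁ - α • v₂) = α⁻¹ • v₁ := by
      rw [neg_smul, sub_neg_eq_add, smul_sub, smul_smul, inv_mul_cancel₀ hα0, one_smul]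
      abel
    rw [heq, norm_smul, Real.norm_eq_abs, hv₁, mul_one, abs_inv] at h5
    have h6 : |α| * (ε / 2) ≤ |α| * |α|⁻¹ := by
      exact mul_le_mul_of_nonneg_left h5 hp.le
    rw [mul_inv_cancel₀ hp.ne'] at h6
    rw [le_div_iff₀ hε]
    nlinarith
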